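/- (Exchange statistics under the Anyon–Fermi mapping.) Let ε : ℝ → ℝ be the sign function, ε(x) = x/|x| for x ≠ 0 and ε(0) = 0, and let κ ∈ ℝ. Let ψ_F : ℝᴺ → ℂ be antisymmetric, i.e. for every transposition of two coordinates ψ_F changes sign. Define ψ_A(z₁,…,z_N) = ( ∏_{1 ≤ j < k ≤ N} exp( i(πκ/2)·ε(z_j − z_k) ) ) · ( ∏_{1 ≤ k < j ≤ N} ε(z_j − z_k) ) · ψ_F(z₁,…,z_N). Then for every index i ∈ {1,…,N−1} and every point with z_i ≠ z_{i+1}: ψ_A(…, z_i, z_{i+1}, …) = exp( iπκ·ε(z_i − z_{i+1}) ) · ψ_A(…, z_{i+1}, z_i, …), where on the right-hand side the arguments in positions i and i+1 are swapped and all other arguments are unchanged. -/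

import Mathlib

lemma sign_sub_neg (x y : ℝ) : Real.sign (y - x) = - Real.sign (x - y) := by
  rcases lt_trichotomy x y with h | h | h
  · rw [Real.sign_of_pos (by linarith), Real.sign_of_neg (by linarith)]; ring
  · subst h; simp
  · rw [Real.sign_of_neg (by linarith), Real.sign_of_pos (by linarith)]

lemma swap_val_eq {N : ℕ} {i j : Fin N} (hij : (j : ℕ) = (i : ℕ) + 1) (x : Fin N) :
    ((Equiv.swap i j x : Fin N) : ℕ) =
      if (x : ℕ) = (i : ℕ) then (j : ℕ) else if (x : ℕ) = (j : ℕ) then (i : ℕ) else (x : ℕ) := by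
  rcases eq_or_ne x i with rfl | h1
  · simp
  · rcases eq_or_ne x j with rfl | h2
    · rw [Equiv.swap_apply_right, if_neg (by omega), if_pos rfl]
    · rw [Equiv.swap_apply_of_ne_of_ne h1 h2,
        if_neg (fun h => h1 (Fin.ext h)), if_neg (fun h => h2 (Fin.ext h))]

lemma swap_pair_lt {N : ℕ} {i j : Fin N} (hij : (j : ℕ) = (i : ℕ) + 1)
    {a b : Fin N} (hab : a < b) (hne : ¬(a = i ∧ b = j)) :
    Equiv.swap i j a < Equiv.swap i j b := by
  have hne' : ¬((a : ℕ) = (i : ℕ) ∧ (b : ℕ) = (j : ℕ)) :=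
    fun ⟨h1, h2⟩ => hne ⟨Fin.ext h1, Fin.ext h2⟩
  rw [Fin.lt_def] at hab ⊢
  rw [swap_val_eq hij, swap_val_eq hij]
  split_ifs <;> omega

lemma prod_erase_swap {N : ℕ} (i j : Fin N) (hij : (j : ℕ) = (i : ℕ) + 1)
    (f : Fin N × Fin N → ℂ) :
    ∏ p ∈ ((Finset.univ.filter (fun p : Fin N × Fin N => p.1 < p.2)).erase (i, j)),
      f (Equiv.swap i j p.1, Equiv.swap i j p.2)
    = ∏ p ∈ ((Finset.univ.filter (fun p : Fin N × Fin N => p.1 < p.2)).erase (i, j)), f p := by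
  have hmem : ∀ p : Fin N × Fin N,
      p ∈ (Finset.univ.filter (fun p : Fin N × Fin N => p.1 < p.2)).erase (i, j) →
      (Equiv.swap i j p.1, Equiv.swap i j p.2) ∈
        (Finset.univ.filter (fun p : Fin N × Fin N => p.1 < p.2)).erase (i, j) := by
    intro p hp
    simp only [Finset.mem_erase, Finset.mem_filter, Finset.mem_univ, true_and] at hp ⊢
    obtain ⟨hne, hlt⟩ := hp
    have hlt' : Equiv.swap i j p.1 < Equiv.swap i j p.2 := by
      apply swap_pair_lt hij hlt
      rintro ⟨h1, h2⟩; exact hne (by rw [← h1, ← h2])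
    refine ⟨?_, hlt'⟩
    intro h
    have h1 : p.1 = j := by
      have := congrArg (fun q : Fin N × Fin N => Equiv.swap i j q.1) h
      simpa using this
    have h2 : p.2 = i := by
      have := congrArg (fun q : Fin N × Fin N => Equiv.swap i j q.2) h
      simpa using this
    rw [h1, h2, Fin.lt_def] at hlt; omega
  refine Finset.prod_nbij' (fun p => (Equiv.swap i j p.1, Equiv.swap i j p.2))
    (fun p => (Equiv.swap i j p.1, Equiv.swap i j p.2)) hmem hmem ?_ ?_ ?_ <;>
    intro p hp <;> simp

theorem anyon_fermi_mapping_exchange_statistics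
    (N : ℕ) (κ : ℝ) (ψF : (Fin N → ℝ) → ℂ)
    (hanti : ∀ (i j : Fin N), i ≠ j → ∀ z : Fin N → ℝ,
      ψF (z ∘ Equiv.swap i j) = -ψF z)
    (ψA : (Fin N → ℝ) → ℂ)
    (hψA : ψA = fun z =>
      (∏ p ∈ Finset.univ.filter (fun p : Fin N × Fin N => p.1 < p.2),
          Complex.exp (Complex.I * (Real.pi * κ / 2) * (Real.sign (z p.1 - z p.2) : ℂ))) *
        (∏ p ∈ Finset.univ.filter (fun p : Fin N × Fin N => p.1 < p.2),
          ((Real.sign (z p.2 - z p.1) : ℝ) : ℂ)) * ψF z) :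
    ∀ (z : Fin N → ℝ) (i j : Fin N), (j : ℕ) = (i : ℕ) + 1 → z i ≠ z j →
      ψA z = Complex.exp (Complex.I * Real.pi * κ * (Real.sign (z i - z j) : ℂ)) *
        ψA (z ∘ Equiv.swap i j) := by
  subst hψA
  intro z i j hij hz
  set S := Finset.univ.filter (fun p : Fin N × Fin N => p.1 < p.2) with hS
  have hiltj : i < j := by rw [Fin.lt_def]; omega
  have hijne : i ≠ j := ne_of_lt hiltj
  have hmem : (i, j) ∈ S := by simp [hS, hiltj]
  set w := z ∘ Equiv.swap i j with hw
  set c : ℂ := Complex.I * (Real.pi * κ / 2) with hc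
  set ε : ℝ := Real.sign (z i - z j) with hε
  -- exponential product over swapped coordinates
  have hE : (∏ p ∈ S, Complex.exp (c * (Real.sign (w p.1 - w p.2) : ℂ)))
      = Complex.exp (c * ((-ε : ℝ) : ℂ)) *
        ∏ p ∈ S.erase (i, j), Complex.exp (c * (Real.sign (z p.1 - z p.2) : ℂ)) := by
    rw [← Finset.mul_prod_erase S _ hmem]
    congr 1
    · simp only [hw, Function.comp, Equiv.swap_apply_left, Equiv.swap_apply_right]
      rw [sign_sub_neg (z i) (z j)]
    · have := prod_erase_swap i j hij
        (fun p => Complex.exp (c * (Real.sign (z p.1 - z p.2) : ℂ)))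
      simp only at this
      rw [← this]
      apply Finset.prod_congr rfl
      intro p _
      simp [hw]
  -- sign product over swapped coordinates
  have hSgn : (∏ p ∈ S, ((Real.sign (w p.2 - w p.1) : ℝ) : ℂ))
      = ((ε : ℝ) : ℂ) * ∏ p ∈ S.erase (i, j), ((Real.sign (z p.2 - z p.1) : ℝ) : ℂ) := by
    rw [← Finset.mul_prod_erase S _ hmem]
    congr 1
    · simp [hw, Function.comp, Equiv.swap_apply_left, Equiv.swap_apply_right, hε]
    · have := prod_erase_swap i j hij
        (fun p => ((Real.sign (z p.2 - z p.1) : ℝ) : ℂ))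
      simp only at this
      rw [← this]
      apply Finset.prod_congr rfl
      intro p _
      simp [hw]
  have hF : ψF w = -ψF z := hanti i j hijne z
  have hEz : (∏ p ∈ S, Complex.exp (c * (Real.sign (z p.1 - z p.2) : ℂ)))
      = Complex.exp (c * ((ε : ℝ) : ℂ)) *
        ∏ p ∈ S.erase (i, j), Complex.exp (c * (Real.sign (z p.1 - z p.2) : ℂ)) := by
    rw [← Finset.mul_prod_erase S _ hmem]
  have hSz : (∏ p ∈ S, ((Real.sign (z p.2 - z p.1) : ℝ) : ℂ))
      = ((-ε : ℝ) : ℂ) * ∏ p ∈ S.erase (i, j), ((Real.sign (z p.2 - z p.1) : ℝ) : ℂ) := by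
    rw [← Finset.mul_prod_erase S _ hmem]
    congr 1
    rw [hε, sign_sub_neg]
  have key : Complex.exp (Complex.I * (Real.pi : ℂ) * (κ : ℂ) * ((ε : ℝ) : ℂ)) *
      Complex.exp (c * ((-ε : ℝ) : ℂ)) = Complex.exp (c * ((ε : ℝ) : ℂ)) := by
    rw [← Complex.exp_add]
    congr 1
    rw [hc]
    push_cast
    ring
  simp only []
  rw [hEz, hSz, hE, hSgn, hF, ← key]
  push_cast
  ring
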